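/- Let M be a compact topological space and G a topological group. If G is locally continuously perfect with constant r, then the group C(M,G) of continuous maps M → G with pointwise multiplication and the compact-open topology is locally continuously perfect with constant at most r. -/

import Mathlib

open scoped commutatorElement

def LocallyContinuouslyPerfectWith (G : Type*) [Group G] [TopologicalSpace G] (r : ℕ) : Prop :=
  ∃ U ∈ nhds (1 : G), ∃ S Sb : ℕ → G → G,
    (∀ i < r, ContinuousOn (S i) U ∧ ContinuousOn (Sb i) U ∧ S i 1 = 1) ∧
    ∀ g ∈ U, g = ((List.range r).map fun i => ⁅S i g, Sb i g⁆).prod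

open scoped Classical in
/-- Lift a map `S : G → G` continuous on an open set `V` to a map `C(M,G) → C(M,G)`. -/
noncomputable def liftMap {M G : Type*} [TopologicalSpace M] [TopologicalSpace G] [One G]
    (V : Set G) (hV : IsOpen V) (S : G → G) (hS : ContinuousOn S V) (f : C(M, G)) : C(M, G) :=
  if h : ∀ x, f x ∈ V then
    (⟨V.restrict S, hS.restrict⟩ : C(V, G)).comp ⟨fun x => ⟨f x, h x⟩,
      (f.continuous.subtype_mk h)⟩
  else ContinuousMap.const M 1

theorem liftMap_apply {M G : Type*} [TopologicalSpace M] [TopologicalSpace G] [One G]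
    (V : Set G) (hV : IsOpen V) (S : G → G) (hS : ContinuousOn S V) (f : C(M, G))
    (h : ∀ x, f x ∈ V) (x : M) : liftMap V hV S hS f x = S (f x) := by
  simp [liftMap, h]
  rfl

theorem liftMap_continuousOn {M G : Type*} [TopologicalSpace M] [TopologicalSpace G] [One G]
    (V : Set G) (hV : IsOpen V) (S : G → G) (hS : ContinuousOn S V) :
    ContinuousOn (liftMap V hV S hS) {f : C(M, G) | ∀ x, f x ∈ V} := by
  rw [continuousOn_iff_continuous_restrict]
  have key : Continuous (fun f : {f : C(M, G) // ∀ x, f x ∈ V} =>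
      (⟨fun x => ⟨f.1 x, f.2 x⟩, f.1.continuous.subtype_mk f.2⟩ : C(M, V))) := by
    have hind := ContinuousMap.isInducing_postcomp (X := M)
      (⟨(Subtype.val : V → G), continuous_subtype_val⟩ : C(V, G))
      Topology.IsInducing.subtypeVal
    rw [hind.continuous_iff]
    convert continuous_subtype_val (p := fun f : C(M, G) => ∀ x, f x ∈ V) using 1
    funext f
    ext x
    rfl
  have : Continuous (fun f : {f : C(M, G) // ∀ x, f x ∈ V} =>
      (⟨V.restrict S, hS.restrict⟩ : C(V, G)).comp
        (⟨fun x => ⟨f.1 x, f.2 x⟩, f.1.continuous.subtype_mk f.2⟩ : C(M, V))) :=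
    (ContinuousMap.continuous_postcomp _).comp key
  refine this.congr (fun f => Eq.symm ?_)
  show liftMap V hV S hS f.1 = _
  rw [liftMap]
  exact dif_pos f.2

/-- For a compact space `M`, if `G` is locally continuously perfect with constant `r`, then
the group `C(M, G)` of continuous maps with pointwise multiplication and the compact-open
topology is locally continuously perfect with constant at most `r`. -/
theorem locallyContinuouslyPerfect_continuousMap (M G : Type*) [TopologicalSpace M]
    [CompactSpace M] [Group G] [TopologicalSpace G] [IsTopologicalGroup G] (r : ℕ)
    (h : LocallyContinuouslyPerfectWith G r) :
    ∃ r' ≤ r, LocallyContinuouslyPerfectWith C(M, G) r' := by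
  obtain ⟨U, hU, S, Sb, hcont, hprod⟩ := h
  set V := interior U with hVdef
  have hVo : IsOpen V := isOpen_interior
  have h1V : (1 : G) ∈ V := mem_interior_iff_mem_nhds.2 hU
  have hVU : V ⊆ U := interior_subset
  refine ⟨r, le_refl r, {f : C(M, G) | ∀ x, f x ∈ V}, ?_, ?_⟩
  · have : IsOpen {f : C(M, G) | ∀ x, f x ∈ V} := by
      have := ContinuousMap.isOpen_setOf_mapsTo (X := M) (Y := G) (K := Set.univ)
        isCompact_univ hVo
      convert this using 1
      ext f
      simp [Set.MapsTo]
    exact this.mem_nhds (fun x => h1V)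
  · refine ⟨fun i => if hi : i < r then liftMap V hVo (S i) ((hcont i hi).1.mono hVU) else id,
            fun i => if hi : i < r then liftMap V hVo (Sb i) ((hcont i hi).2.1.mono hVU) else id,
            ?_, ?_⟩
    · intro i hi
      simp only [dif_pos hi]
      refine ⟨liftMap_continuousOn _ _ _ _, liftMap_continuousOn _ _ _ _, ?_⟩
      ext x
      rw [show ((1 : C(M, G)) : M → G) x = (1 : G) from rfl] at *
      rw [liftMap_apply _ _ _ _ _ (fun _ => h1V)]
      exact (hcont i hi).2.2
    · intro f hf
      ext x
      have evalprod : ∀ (l : List C(M, G)), l.prod x = (l.map (fun g : C(M,G) => g x)).prod := by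
        intro l
        induction l with
        | nil => simp
        | cons a t ih => simp [ih]
      rw [evalprod, List.map_map]
      have := hprod (f x) (hVU (hf x))
      convert this using 2
      refine List.map_congr_left ?_
      intro i hi
      rw [List.mem_range] at hi
      simp only [Function.comp, dif_pos hi]
      show ⁅liftMap V hVo (S i) _ f, liftMap V hVo (Sb i) _ f⁆ x = _
      simp only [commutatorElement_def, ContinuousMap.mul_apply, ContinuousMap.inv_apply]
      rw [liftMap_apply _ _ _ _ _ hf, liftMap_apply _ _ _ _ _ hf]
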